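/- Let E be a real normed vector space, u : E → ℝ, K ≥ 0, and x, y ∈ E. Suppose p is a K-super-differential of u at x, and q is simultaneously a K-super-differential and a K-sub-differential of u at y. Then ‖p − q‖ ≤ 6K‖x − y‖, where ‖p − q‖ is the operator norm of the continuous linear functional p − q. (Paper's Lemma: Lipschitz estimate on derivatives along the contact set I(u₋, u₊), following Fathi's proof that the Aubry set is a Lipschitz graph.) -/

import Mathlib

/-- if `p` is a `K`-super-differential of `u` at `x` and `q` is both a
`K`-super-differential and a `K`-sub-differential of `u` at `y`, then
`‖p − q‖ ≤ 6K‖x − y‖`. -/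
theorem stmt_10 {E : Type*} [NormedAddCommGroup E] [NormedSpace ℝ E]
    (u : E → ℝ) (K : ℝ) (hK : 0 ≤ K) (x y : E) (p q : E →L[ℝ] ℝ)
    (hp : ∀ h : E, u (x + h) ≤ u x + p h + K * ‖h‖ ^ 2)
    (hq_sup : ∀ h : E, u (y + h) ≤ u y + q h + K * ‖h‖ ^ 2)
    (hq_sub : ∀ h : E, u y + q h - K * ‖h‖ ^ 2 ≤ u (y + h)) :
    ‖p - q‖ ≤ 6 * K * ‖x - y‖ := by
  set r := ‖x - y‖ with hr
  have hr0 : 0 ≤ r := norm_nonneg _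
  have key2 : ∀ h : E, q h - p h ≤ 2 * K * (‖h‖ ^ 2 + ‖h‖ * r + r ^ 2) := by
    intro h
    have A := hq_sub (h + (x - y))
    have B := hp h
    have C := hq_sup (x - y)
    have e1 : y + (h + (x - y)) = x + h := by abel
    have e2 : y + (x - y) = x := by abel
    rw [e1] at A
    rw [e2] at C
    have hq1 : q (h + (x - y)) = q h + q (x - y) := map_add q h (x - y)
    have hn : ‖h + (x - y)‖ ≤ ‖h‖ + r := norm_add_le _ _
    rw [← hr] at C
    nlinarith [norm_nonneg h, norm_nonneg (h + (x - y)),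
      mul_self_le_mul_self (norm_nonneg (h + (x - y))) hn]
  have key3 : ∀ h : E, q h - p h ≤ 6 * K * r * ‖h‖ := by
    intro h
    rcases eq_or_ne h 0 with h0 | h0
    · simp [h0]
    have hnpos : 0 < ‖h‖ := norm_pos_iff.mpr h0
    have scaled : ∀ s : ℝ, 0 < s →
        s * (q h - p h) ≤ 2 * K * (s ^ 2 + s * r + r ^ 2) * ‖h‖ := by
      intro s hs
      have hc : 0 < s / ‖h‖ := by positivity
      have hnorm : ‖(s / ‖h‖) • h‖ = s := by
        rw [norm_smul, Real.norm_eq_abs, abs_of_pos hc]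
        field_simp
      have h1 := key2 ((s / ‖h‖) • h)
      rw [map_smul, map_smul, hnorm] at h1
      simp only [smul_eq_mul] at h1
      have h2 := mul_le_mul_of_nonneg_right h1 hnpos.le
      have h3 : (s / ‖h‖ * q h - s / ‖h‖ * p h) * ‖h‖ = s * (q h - p h) := by
        field_simp
      rw [h3] at h2
      exact h2
    rcases eq_or_lt_of_le hr0 with hr1 | hr1
    · -- r = 0 : show q h - p h ≤ 0 via ε-argument
      have h0r : 6 * K * r * ‖h‖ = 0 := by rw [← hr1]; ring
      rw [h0r]
      have hε : ∀ ε : ℝ, 0 < ε → q h - p h ≤ 0 + ε := by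
        intro ε hε
        have hs : 0 < ε / (2 * K * ‖h‖ + 1) := by positivity
        have := scaled _ hs
        rw [← hr1] at this
        set s := ε / (2 * K * ‖h‖ + 1) with hsdef
        have hse : s * (2 * K * ‖h‖ + 1) = ε := by
          rw [hsdef]; field_simp
        nlinarith [this, mul_pos hs hnpos]
      exact le_of_forall_pos_le_add hε
    · have := scaled r hr1
      nlinarith [this]
  have key4 : ∀ h : E, |p h - q h| ≤ 6 * K * r * ‖h‖ := by
    intro h
    have h1 := key3 h
    have h2 := key3 (-h)
    rw [map_neg, map_neg, norm_neg] at h2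
    rw [abs_le]
    constructor <;> linarith
  rw [show (6 : ℝ) * K * r = 6 * K * ‖x - y‖ from rfl] at *
  apply ContinuousLinearMap.opNorm_le_bound _ (by positivity)
  intro h
  rw [ContinuousLinearMap.sub_apply, Real.norm_eq_abs]
  exact key4 h
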